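/- For every integer k ≥ 0, as n → ∞ one has n · ∫₀^{1/(n+1)} (ln(n·t/(1−t)))^k · t(1−t) dt = (−1)^k · k!/2^{k+1} · (1/n) + O(1/n²); that is, the difference between n² · ∫₀^{1/(n+1)} (ln(n·t/(1−t)))^k · t(1−t) dt and (−1)^k · k!/2^{k+1} is bounded by C/n for some constant C and all n ≥ 1. -/

import Mathlib

open MeasureTheory Real Set Filter
open scoped Interval

lemma tendsto_logpow_mul (k : ℕ) :
    Tendsto (fun u : ℝ => (Real.log u) ^ k * u) (nhdsWithin 0 (Set.Ioi 0)) (nhds 0) := by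
  rcases Nat.eq_zero_or_pos k with hk | hk
  · subst hk
    simp only [pow_zero, one_mul]
    exact tendsto_id.mono_left nhdsWithin_le_nhds
  · have h := (tendsto_log_mul_rpow_nhdsGT_zero (r := 1 / k) (by positivity)).pow k
    rw [zero_pow hk.ne'] at h
    refine h.congr' ?_
    filter_upwards [self_mem_nhdsWithin] with u hu
    have hu' : (0:ℝ) < u := hu
    rw [mul_pow, ← Real.rpow_natCast (u ^ (1/(k:ℝ))) k, ← Real.rpow_mul hu'.le]
    rw [one_div, inv_mul_cancel₀ (by exact_mod_cast hk.ne'), Real.rpow_one]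

lemma contF (k : ℕ) : ContinuousOn (fun u : ℝ => (Real.log u) ^ k * u) (Set.Ici 0) := by
  intro u hu
  rcases eq_or_lt_of_le (Set.mem_Ici.mp hu) with h | h
  · subst h
    unfold ContinuousWithinAt
    simp only [Real.log_zero, mul_zero]
    rw [← Set.Ioi_insert, nhdsWithin_insert]
    refine Tendsto.sup ?_ (tendsto_logpow_mul k)
    simpa using tendsto_pure_nhds (fun u : ℝ => (Real.log u) ^ k * u) 0
  · exact (((Real.continuousAt_log h.ne').pow k).mul continuousAt_id).continuousWithinAt

lemma intble (k : ℕ) : IntervalIntegrable (fun u : ℝ => (Real.log u) ^ k * u) volume 0 1 := by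
  apply ContinuousOn.intervalIntegrable
  rw [Set.uIcc_of_le (by norm_num : (0:ℝ) ≤ 1)]
  exact (contF k).mono Set.Icc_subset_Ici_self

lemma Jval (k : ℕ) :
    ∫ u in (0:ℝ)..1, (Real.log u) ^ k * u
      = (-1 : ℝ) ^ k * (Nat.factorial k) / 2 ^ (k + 1) := by
  induction k with
  | zero => simp [integral_id]
  | succ k ih =>
    have key : ∫ u in (0:ℝ)..1,
        ((Real.log u) ^ (k+1) * u + ((k+1:ℝ)/2) * ((Real.log u) ^ k * u)) = 0 := by
      have hA : ContinuousOn (fun u : ℝ => u^2/2 * (Real.log u) ^ (k+1)) [[(0:ℝ), 1]] := by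
        rw [Set.uIcc_of_le (by norm_num : (0:ℝ) ≤ 1)]
        have := ((contF (k+1)).mono Set.Icc_subset_Ici_self).mul
          ((continuousOn_id.mul continuousOn_const) : ContinuousOn (fun u : ℝ => u * (1/2)) (Set.Icc 0 1))
        refine this.congr fun u _ => by simp only [Pi.mul_apply, id_eq]; ring
      have hderiv : ∀ u ∈ Set.Ioo (min (0:ℝ) 1) (max (0:ℝ) 1),
          HasDerivWithinAt (fun u : ℝ => u^2/2 * (Real.log u) ^ (k+1))
            ((Real.log u) ^ (k+1) * u + ((k+1:ℝ)/2) * ((Real.log u) ^ k * u)) (Set.Ioi u) u := by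
        intro u hu
        rw [min_eq_left (by norm_num : (0:ℝ) ≤ 1), max_eq_right (by norm_num : (0:ℝ) ≤ 1)] at hu
        have hu0 : u ≠ 0 := hu.1.ne'
        have h1 : HasDerivAt (fun u : ℝ => u^2/2 * (Real.log u) ^ (k+1))
            (u * (Real.log u) ^ (k+1) + u^2/2 * ((k+1) * (Real.log u) ^ k * (1/u))) u := by
          have := (((hasDerivAt_pow 2 u).div_const 2).mul
            (((Real.hasDerivAt_log hu0).pow (k+1))))
          refine this.congr_deriv ?_
          simp only [Pi.pow_apply]
          push_cast
          ring
        refine (h1.congr_deriv ?_).hasDerivWithinAt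
        field_simp
      have hint : IntervalIntegrable
          (fun u : ℝ => (Real.log u) ^ (k+1) * u + ((k+1:ℝ)/2) * ((Real.log u) ^ k * u))
          volume 0 1 :=
        (intble (k+1)).add ((intble k).const_mul _)
      have := intervalIntegral.integral_eq_sub_of_hasDeriv_right hA hderiv hint
      rw [this]
      norm_num
    rw [intervalIntegral.integral_add (intble (k+1)) ((intble k).const_mul _),
      intervalIntegral.integral_const_mul, ih] at key
    have h2 : (0:ℝ) < 2 ^ (k+1) := by positivity
    field_simp at key ⊢
    push_cast [Nat.factorial_succ]
    linear_combination key

/-- For every integer `k ≥ 0`, as `n → ∞`,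
`n · ∫₀^{1/(n+1)} (ln(n·t/(1−t)))^k · t(1−t) dt = (−1)^k · k!/2^(k+1) · (1/n) + O(1/n²)`,
i.e. the difference between `n² · ∫₀^{1/(n+1)} (ln(n·t/(1−t)))^k · t(1−t) dt` and
`(−1)^k · k!/2^(k+1)` is bounded by `C/n` for some constant `C` and all `n ≥ 1`. -/
theorem integral_log_pow_asymptotics (k : ℕ) :
    ∃ C : ℝ, ∀ n : ℕ, 1 ≤ n →
      |(n : ℝ) ^ 2 * (∫ t in (0:ℝ)..(1 / ((n : ℝ) + 1)),
            (Real.log ((n : ℝ) * t / (1 - t))) ^ k * (t * (1 - t)))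
          - (-1 : ℝ) ^ k * (Nat.factorial k) / 2 ^ (k + 1)| ≤ C / n := by
  refine ⟨(∫ u in (0:ℝ)..1, |(Real.log u) ^ k * u|) * 4, fun n hn => ?_⟩
  set N : ℝ := (n : ℝ) with hNdef
  have hN : 1 ≤ N := by rw [hNdef]; exact_mod_cast hn
  have hNpos : 0 < N := lt_of_lt_of_le one_pos hN
  set c : ℝ := 1 / (N + 1) with hcdef
  set φ : ℝ → ℝ := fun u => u / (N + u) with hφdef
  set G : ℝ → ℝ := fun t => (Real.log (N * t / (1 - t))) ^ k * (t * (1 - t)) with hGdef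
  have hden : ∀ u : ℝ, u ∈ Set.Icc (0:ℝ) 1 → 0 < N + u := fun u hu => by
    have := hu.1; linarith
  -- derivative of φ
  have h1 : ∀ u ∈ Set.uIcc (0:ℝ) 1, HasDerivAt φ (N / (N + u) ^ 2) u := by
    intro u hu
    rw [Set.uIcc_of_le (by norm_num : (0:ℝ) ≤ 1)] at hu
    have h0 : N + u ≠ 0 := (hden u hu).ne'
    have := (hasDerivAt_id u).div ((hasDerivAt_id u).const_add N) h0
    refine this.congr_deriv ?_
    simp only [id_eq]
    ring
  have h2 : ContinuousOn (fun u : ℝ => N / (N + u) ^ 2) (Set.uIcc (0:ℝ) 1) := by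
    rw [Set.uIcc_of_le (by norm_num : (0:ℝ) ≤ 1)]
    exact continuousOn_const.div
      ((continuous_const.add continuous_id).pow 2).continuousOn
      (fun u hu => pow_ne_zero 2 (hden u hu).ne')
  have hφ0 : φ 0 = 0 := by simp [hφdef]
  have hφ1 : φ 1 = c := by simp [hφdef, hcdef]
  -- image of φ
  have himg : φ '' Set.uIcc (0:ℝ) 1 ⊆ Set.Icc 0 c := by
    rw [Set.uIcc_of_le (by norm_num : (0:ℝ) ≤ 1)]
    rintro _ ⟨u, hu, rfl⟩
    have hd := hden u hu
    refine ⟨div_nonneg hu.1 hd.le, ?_⟩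
    rw [hcdef, div_le_div_iff₀ hd (by linarith)]
    nlinarith [hu.1, hu.2]
  -- continuity of G on [0, c]
  have hc1 : ∀ t : ℝ, t ∈ Set.Icc (0:ℝ) c → 0 < 1 - t := by
    intro t ht
    have : c ≤ 1/2 := by
      rw [hcdef, div_le_div_iff₀ (by linarith) (by norm_num)]
      linarith
    have := ht.2
    linarith
  have hGc : ContinuousOn G (Set.Icc 0 c) := by
    have hψ : ContinuousOn (fun t : ℝ => N * t / (1 - t)) (Set.Icc 0 c) :=
      (continuous_const.mul continuous_id).continuousOn.div
        (continuous_const.sub continuous_id).continuousOn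
        (fun t ht => (hc1 t ht).ne')
    have hmaps : Set.MapsTo (fun t : ℝ => N * t / (1 - t)) (Set.Icc 0 c) (Set.Ici 0) :=
      fun t ht => div_nonneg (mul_nonneg hNpos.le ht.1) (hc1 t ht).le
    have hcomp := ((contF k).comp hψ hmaps).mul
      (((continuous_const.sub continuous_id).pow 2).continuousOn.div continuousOn_const
        (fun t _ => hNpos.ne') :
        ContinuousOn (fun t : ℝ => (1 - t) ^ 2 / N) (Set.Icc 0 c))
    refine hcomp.congr fun t ht => ?_
    have h1t : (1 : ℝ) - t ≠ 0 := (hc1 t ht).ne'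
    simp only [Function.comp, hGdef, id_eq, Pi.mul_apply, Pi.div_apply, Pi.pow_apply, Pi.sub_apply]
    field_simp
  -- substitution
  have key1 : ∫ u in (0:ℝ)..1, (G ∘ φ) u * (N / (N + u) ^ 2) = ∫ t in (0:ℝ)..c, G t := by
    have := intervalIntegral.integral_comp_mul_deriv' h1 h2 (hGc.mono himg)
    rwa [hφ0, hφ1] at this
  have key2 : Set.EqOn (fun u : ℝ => (G ∘ φ) u * (N / (N + u) ^ 2))
      (fun u : ℝ => (Real.log u) ^ k * (N ^ 2 * u / (N + u) ^ 4)) (Set.uIcc (0:ℝ) 1) := by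
    intro u hu
    rw [Set.uIcc_of_le (by norm_num : (0:ℝ) ≤ 1)] at hu
    have hd := hden u hu
    have hsub : 1 - φ u = N / (N + u) := by
      rw [hφdef]; field_simp; ring
    have harg : N * φ u / (1 - φ u) = u := by
      rw [hsub, hφdef]
      field_simp
    simp only [Function.comp, hGdef]
    rw [harg, hsub, hφdef]
    field_simp
  have hI : ∫ t in (0:ℝ)..c, G t
      = ∫ u in (0:ℝ)..1, (Real.log u) ^ k * (N ^ 2 * u / (N + u) ^ 4) := by
    rw [← key1]
    exact intervalIntegral.integral_congr key2
  -- integrabilities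
  have cont1 : ContinuousOn (fun u : ℝ => (Real.log u) ^ k * u * (N ^ 4 / (N + u) ^ 4))
      (Set.Icc (0:ℝ) 1) :=
    ((contF k).mono Set.Icc_subset_Ici_self).mul
      (continuousOn_const.div ((continuous_const.add continuous_id).pow 4).continuousOn
        (fun u hu => pow_ne_zero 4 (hden u hu).ne'))
  have ib1 : IntervalIntegrable (fun u : ℝ => (Real.log u) ^ k * u * (N ^ 4 / (N + u) ^ 4))
      volume 0 1 := by
    apply ContinuousOn.intervalIntegrable
    rwa [Set.uIcc_of_le (by norm_num : (0:ℝ) ≤ 1)]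
  -- N^2 * I
  have hNI : N ^ 2 * (∫ t in (0:ℝ)..c, G t)
      = ∫ u in (0:ℝ)..1, (Real.log u) ^ k * u * (N ^ 4 / (N + u) ^ 4) := by
    rw [hI, ← intervalIntegral.integral_const_mul]
    apply intervalIntegral.integral_congr
    intro u hu
    rw [Set.uIcc_of_le (by norm_num : (0:ℝ) ≤ 1)] at hu
    have hd := hden u hu
    field_simp
  -- difference
  have hdiff : N ^ 2 * (∫ t in (0:ℝ)..c, G t)
        - (-1 : ℝ) ^ k * (Nat.factorial k) / 2 ^ (k + 1)
      = ∫ u in (0:ℝ)..1, (Real.log u) ^ k * u * (N ^ 4 / (N + u) ^ 4 - 1) := by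
    rw [hNI, ← Jval k, ← intervalIntegral.integral_sub ib1 (intble k)]
    apply intervalIntegral.integral_congr
    intro u _
    ring
  -- pointwise bound
  have hpt : ∀ u ∈ Set.Icc (0:ℝ) 1,
      |(Real.log u) ^ k * u * (N ^ 4 / (N + u) ^ 4 - 1)|
        ≤ |(Real.log u) ^ k * u| * (4 / N) := by
    intro u hu
    rw [abs_mul]
    refine mul_le_mul_of_nonneg_left ?_ (abs_nonneg _)
    have hd := hden u hu
    set x : ℝ := N / (N + u) with hxdef
    have hx0 : 0 ≤ x := div_nonneg hNpos.le hd.le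
    have hx1 : x ≤ 1 := by
      rw [hxdef, div_le_one hd]; linarith [hu.1]
    have hxpow : N ^ 4 / (N + u) ^ 4 = x ^ 4 := by
      rw [hxdef, div_pow]
    have h1x : 1 - x ≤ 1 / N := by
      have : 1 - x = u / (N + u) := by rw [hxdef]; field_simp; ring
      rw [this, div_le_div_iff₀ hd hNpos]
      nlinarith [hu.1, hu.2]
    have hb : 1 - x ^ 4 ≤ 4 * (1 - x) := by
      nlinarith [sq_nonneg (1 - x), mul_nonneg (sq_nonneg (1 - x)) hx0,
        mul_nonneg (mul_nonneg hx0 hx0) hx0, mul_nonneg (sq_nonneg (1 - x)) (mul_nonneg hx0 hx0)]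
    rw [hxpow, abs_sub_comm,
      abs_of_nonneg (sub_nonneg.2 (pow_le_one₀ hx0 hx1) : (0:ℝ) ≤ 1 - x ^ 4)]
    calc 1 - x ^ 4 ≤ 4 * (1 - x) := hb
      _ ≤ 4 * (1 / N) := by linarith
      _ = 4 / N := by ring
  -- integrability of both sides of the bound
  have ib2 : IntervalIntegrable
      (fun u : ℝ => |(Real.log u) ^ k * u * (N ^ 4 / (N + u) ^ 4 - 1)|) volume 0 1 := by
    apply ContinuousOn.intervalIntegrable
    rw [Set.uIcc_of_le (by norm_num : (0:ℝ) ≤ 1)]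
    exact (((contF k).mono Set.Icc_subset_Ici_self).mul
      ((continuousOn_const.div ((continuous_const.add continuous_id).pow 4).continuousOn
        (fun u hu => pow_ne_zero 4 (hden u hu).ne')).sub continuousOn_const)).abs
  have ib3 : IntervalIntegrable
      (fun u : ℝ => |(Real.log u) ^ k * u| * (4 / N)) volume 0 1 := by
    apply ContinuousOn.intervalIntegrable
    rw [Set.uIcc_of_le (by norm_num : (0:ℝ) ≤ 1)]
    exact (((contF k).mono Set.Icc_subset_Ici_self).abs).mul continuousOn_const
  -- final bound
  have hfinal : |N ^ 2 * (∫ t in (0:ℝ)..c, G t)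
        - (-1 : ℝ) ^ k * (Nat.factorial k) / 2 ^ (k + 1)|
      ≤ (∫ u in (0:ℝ)..1, |(Real.log u) ^ k * u|) * 4 / N := by
    rw [hdiff]
    calc |∫ u in (0:ℝ)..1, (Real.log u) ^ k * u * (N ^ 4 / (N + u) ^ 4 - 1)|
        ≤ ∫ u in (0:ℝ)..1, |(Real.log u) ^ k * u * (N ^ 4 / (N + u) ^ 4 - 1)| :=
          intervalIntegral.abs_integral_le_integral_abs zero_le_one
      _ ≤ ∫ u in (0:ℝ)..1, |(Real.log u) ^ k * u| * (4 / N) :=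
          intervalIntegral.integral_mono_on zero_le_one ib2 ib3 hpt
      _ = (∫ u in (0:ℝ)..1, |(Real.log u) ^ k * u|) * (4 / N) :=
          intervalIntegral.integral_mul_const _ _
      _ = (∫ u in (0:ℝ)..1, |(Real.log u) ^ k * u|) * 4 / N := by ring
  exact hfinal
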